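/- With W as above (matrix Jacobi field with W(0)=0, W'(0)=I, W(t) invertible for 0<t≤1), extend A(t) = tW'(t)W(t)^{−1} by A(0) = I. Then A is continuously differentiable on [0,1], A'(0) = 0, and A satisfies the Riccati-type equation A'(t) = −t R(t) − A(t)²/t + A(t)/t for 0 < t ≤ 1. -/

import Mathlib

attribute [local instance] Matrix.normedAddCommGroup Matrix.normedSpace



open Filter Set Topology

theorem aux_norm_mul {n : ℕ} (X Y : Matrix (Fin n) (Fin n) ℝ) : ‖X * Y‖ ≤ n * ‖X‖ * ‖Y‖ := by
  rw [Matrix.norm_le_iff (by positivity)]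
  intro i j
  rw [Matrix.mul_apply]
  calc ‖∑ k, X i k * Y k j‖ ≤ ∑ k : Fin n, ‖X i k * Y k j‖ := norm_sum_le _ _
    _ ≤ ∑ _k : Fin n, ‖X‖ * ‖Y‖ := by
        refine Finset.sum_le_sum fun k _ => ?_
        rw [norm_mul]
        exact mul_le_mul (Matrix.norm_entry_le_entrywise_sup_norm X)
          (Matrix.norm_entry_le_entrywise_sup_norm Y) (norm_nonneg _) (norm_nonneg _)
    _ = n * ‖X‖ * ‖Y‖ := by simp [mul_assoc]

theorem aux_hasDerivAt_mul {n : ℕ} {f g : ℝ → Matrix (Fin n) (Fin n) ℝ}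
    {f' g' : Matrix (Fin n) (Fin n) ℝ} {t₀ : ℝ}
    (hf : HasDerivAt f f' t₀) (hg : HasDerivAt g g' t₀) :
    HasDerivAt (fun t => f t * g t) (f' * g t₀ + f t₀ * g') t₀ := by
  refine hasDerivAt_iff_tendsto_slope.mpr ?_
  have heq : ∀ t, t ≠ t₀ → slope (fun t => f t * g t) t₀ t
      = slope f t₀ t * g t + f t₀ * slope g t₀ t := by
    intro t ht
    simp only [slope_def_module, Matrix.smul_mul, Matrix.mul_smul, ← smul_add]
    congr 1
    rw [sub_mul, mul_sub]
    abel
  have h1 : Tendsto (slope f t₀) (𝓝[≠] t₀) (𝓝 f') := hasDerivAt_iff_tendsto_slope.mp hf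
  have h2 : Tendsto (slope g t₀) (𝓝[≠] t₀) (𝓝 g') := hasDerivAt_iff_tendsto_slope.mp hg
  have h3 : Tendsto g (𝓝[≠] t₀) (𝓝 (g t₀)) := hg.continuousAt.continuousWithinAt
  have := (h1.mul h3).add ((tendsto_const_nhds (x := f t₀)).mul h2)
  refine this.congr' ?_
  filter_upwards [self_mem_nhdsWithin] with t ht
  exact (heq t ht).symm

theorem aux_hasDerivAt_inv {n : ℕ} {W W' : ℝ → Matrix (Fin n) (Fin n) ℝ} {t₀ : ℝ}
    (hW : ∀ t, HasDerivAt W (W' t) t) (h : (W t₀).det ≠ 0) :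
    HasDerivAt (fun t => (W t)⁻¹) (-((W t₀)⁻¹ * W' t₀ * (W t₀)⁻¹)) t₀ := by
  have hWc : Continuous W := continuous_iff_continuousAt.mpr fun t => (hW t).continuousAt
  have hVc : ∀ s : ℝ, (W s).det ≠ 0 → ContinuousAt (fun t => (W t)⁻¹) s := by
    intro s hs
    have : ContinuousAt Ring.inverse ((W s).det) := by
      rw [Ring.inverse_eq_inv']
      exact continuousAt_inv₀ hs
    exact (continuousAt_matrix_inv (W s) this).comp hWc.continuousAt
  refine hasDerivAt_iff_tendsto_slope.mpr ?_
  have hdet : ∀ᶠ t in 𝓝 t₀, (W t).det ≠ 0 :=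
    (hWc.matrix_det.continuousAt).eventually_ne h
  have h1 : Tendsto (fun t => (W t)⁻¹) (𝓝[≠] t₀) (𝓝 ((W t₀)⁻¹)) :=
    ((hVc t₀ h).continuousWithinAt)
  have h2 : Tendsto (fun t => -(slope W t₀ t)) (𝓝[≠] t₀) (𝓝 (-(W' t₀))) :=
    (hasDerivAt_iff_tendsto_slope.mp (hW t₀)).neg
  have h3 := (h1.mul h2).mul (tendsto_const_nhds (x := (W t₀)⁻¹))
  have : (W t₀)⁻¹ * -(W' t₀) * (W t₀)⁻¹ = -((W t₀)⁻¹ * W' t₀ * (W t₀)⁻¹) := by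
    simp [Matrix.mul_neg, Matrix.neg_mul]
  rw [this] at h3
  refine h3.congr' ?_
  filter_upwards [hdet.filter_mono nhdsWithin_le_nhds, self_mem_nhdsWithin] with t hdt
    (htne : t ≠ t₀)
  have key : (W t)⁻¹ * (W t₀ - W t) * (W t₀)⁻¹ = (W t)⁻¹ - (W t₀)⁻¹ := by
    have e1 : (W t)⁻¹ * (W t₀ - W t) * (W t₀)⁻¹
        = (W t)⁻¹ * (W t₀ * (W t₀)⁻¹) - ((W t)⁻¹ * W t) * (W t₀)⁻¹ := by noncomm_ring
    rw [e1, Matrix.mul_nonsing_inv _ (isUnit_iff_ne_zero.mpr h),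
      Matrix.nonsing_inv_mul _ (isUnit_iff_ne_zero.mpr hdt), mul_one, one_mul]
  show (W t)⁻¹ * -slope W t₀ t * (W t₀)⁻¹ = slope (fun t => (W t)⁻¹) t₀ t
  rw [slope_def_module, slope_def_module, ← key]
  have e2 : -((t - t₀)⁻¹ • (W t - W t₀)) = (t - t₀)⁻¹ • (W t₀ - W t) := by
    rw [← smul_neg, neg_sub]
  rw [e2, Matrix.mul_smul, Matrix.smul_mul]

set_option maxHeartbeats 2000000 in
/-- With `W` a matrix Jacobi field (`W'' + RW = 0`, `W(0) = 0`, `W'(0) = I`, `W(t)`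
invertible for `0 < t ≤ 1`), extend `A(t) = t W'(t) W(t)⁻¹` by `A(0) = I`. Then `A` is
continuously differentiable on `[0,1]`, `A'(0) = 0`, and `A` satisfies the Riccati-type
equation `A'(t) = −t R(t) − A(t)²/t + A(t)/t` for `0 < t ≤ 1`. -/
theorem jacobi_riccati (n : ℕ)
    (R W W' W'' : ℝ → Matrix (Fin n) (Fin n) ℝ)
    (hRcont : ∀ i j, Continuous fun t => R t i j)
    (hRsymm : ∀ t ∈ Set.Icc (0:ℝ) 1, (R t).IsSymm)
    (hW : ∀ t, HasDerivAt W (W' t) t)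
    (hW' : ∀ t, HasDerivAt W' (W'' t) t)
    (hODE : ∀ t ∈ Set.Icc (0:ℝ) 1, W'' t = -(R t * W t))
    (hW0 : W 0 = 0) (hW'0 : W' 0 = 1)
    (hinv : ∀ t ∈ Set.Ioc (0:ℝ) 1, IsUnit (W t))
    (A : ℝ → Matrix (Fin n) (Fin n) ℝ)
    (hA0 : A 0 = 1)
    (hA : ∀ t ∈ Set.Ioc (0:ℝ) 1, A t = t • (W' t * (W t)⁻¹)) :
    ContDiffOn ℝ 1 A (Set.Icc 0 1)
    ∧ derivWithin A (Set.Icc 0 1) 0 = 0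
    ∧ ∀ t ∈ Set.Ioc (0:ℝ) 1,
        derivWithin A (Set.Icc 0 1) t
          = -(t • R t) - t⁻¹ • (A t * A t) + t⁻¹ • A t := by
  have hWc : Continuous W := continuous_iff_continuousAt.mpr fun t => (hW t).continuousAt
  have hW'c : Continuous W' := continuous_iff_continuousAt.mpr fun t => (hW' t).continuousAt
  have hRc : Continuous R := continuous_matrix hRcont
  have hdet : ∀ t ∈ Set.Ioc (0:ℝ) 1, (W t).det ≠ 0 := fun t ht =>
    ((Matrix.isUnit_iff_isUnit_det _).mp (hinv t ht)).ne_zero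
  obtain ⟨MR, hMR⟩ := (isCompact_Icc (a := (0:ℝ)) (b := 1)).exists_bound_of_continuousOn
    hRc.continuousOn
  obtain ⟨MW, hMW⟩ := (isCompact_Icc (a := (0:ℝ)) (b := 1)).exists_bound_of_continuousOn
    hWc.continuousOn
  have hMR0 : 0 ≤ MR := le_trans (norm_nonneg _) (hMR 0 (by norm_num))
  have hMW0 : 0 ≤ MW := le_trans (norm_nonneg _) (hMW 0 (by norm_num))
  set C₂ : ℝ := n * MR * MW with hC₂def
  have hC₂0 : 0 ≤ C₂ := by positivity
  have hW''le : ∀ t ∈ Set.Icc (0:ℝ) 1, ‖W'' t‖ ≤ C₂ := by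
    intro t ht
    rw [hODE t ht, norm_neg]
    calc ‖R t * W t‖ ≤ n * ‖R t‖ * ‖W t‖ := aux_norm_mul _ _
      _ ≤ n * MR * MW := by
          have h1 := hMR t ht
          have h2 := hMW t ht
          gcongr
  -- S1 : ‖W' t - 1‖ ≤ C₂ t on [0,1]
  have hS1 : ∀ t ∈ Set.Icc (0:ℝ) 1, ‖W' t - 1‖ ≤ C₂ * t := by
    intro t ht
    have := Convex.norm_image_sub_le_of_norm_hasDerivWithin_le
      (f := W') (f' := W'') (s := Set.Icc 0 t) (C := C₂)
      (fun u _ => (hW' u).hasDerivWithinAt)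
      (fun u hu => hW''le u ⟨hu.1, le_trans hu.2 ht.2⟩) (convex_Icc _ _)
      (Set.left_mem_Icc.mpr ht.1) (Set.right_mem_Icc.mpr ht.1)
    rwa [hW'0, sub_zero, Real.norm_eq_abs, abs_of_nonneg ht.1] at this
  -- S2 : ‖W t - t • 1‖ ≤ C₂ t² on [0,1]
  have hS2 : ∀ t ∈ Set.Icc (0:ℝ) 1, ‖W t - t • (1:Matrix (Fin n) (Fin n) ℝ)‖ ≤ C₂ * t * t := by
    intro t ht
    have hder : ∀ u : ℝ, HasDerivAt
        (fun u => W u - u • (1:Matrix (Fin n) (Fin n) ℝ)) (W' u - 1) u := by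
      intro u
      have := (hW u).sub ((hasDerivAt_id u).smul_const (1:Matrix (Fin n) (Fin n) ℝ))
      simp only [one_smul, id_eq] at this
      exact this
    have := Convex.norm_image_sub_le_of_norm_hasDerivWithin_le
      (f := fun u => W u - u • (1:Matrix (Fin n) (Fin n) ℝ)) (f' := fun u => W' u - 1)
      (s := Set.Icc 0 t) (C := C₂ * t)
      (fun u _ => (hder u).hasDerivWithinAt)
      (fun u hu => le_trans (hS1 u ⟨hu.1, le_trans hu.2 ht.2⟩)
        (mul_le_mul_of_nonneg_left hu.2 hC₂0)) (convex_Icc _ _)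
      (Set.left_mem_Icc.mpr ht.1) (Set.right_mem_Icc.mpr ht.1)
    simp only [hW0, zero_smul, sub_zero, sub_zero, Real.norm_eq_abs] at this
    rwa [abs_of_nonneg ht.1] at this
  -- bound on ‖W t‖ linear in t
  have hWle : ∀ t ∈ Set.Icc (0:ℝ) 1,
      ‖W t‖ ≤ (‖(1:Matrix (Fin n) (Fin n) ℝ)‖ + C₂) * t := by
    intro t ht
    have h1 : ‖W t‖ ≤ ‖t • (1:Matrix (Fin n) (Fin n) ℝ)‖ + ‖W t - t • 1‖ := by
      have := norm_add_le (t • (1:Matrix (Fin n) (Fin n) ℝ)) (W t - t • 1)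
      simpa using this
    have h2 : ‖t • (1:Matrix (Fin n) (Fin n) ℝ)‖ = t * ‖(1:Matrix (Fin n) (Fin n) ℝ)‖ := by
      rw [norm_smul, Real.norm_eq_abs, abs_of_nonneg ht.1]
    calc ‖W t‖ ≤ t * ‖(1:Matrix (Fin n) (Fin n) ℝ)‖ + C₂ * t * t := by
          rw [← h2]; exact le_trans h1 (add_le_add le_rfl (hS2 t ht))
      _ ≤ (‖(1:Matrix (Fin n) (Fin n) ℝ)‖ + C₂) * t := by
          have h3 : C₂ * t * t ≤ C₂ * t * 1 := by
            gcongr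
            · exact mul_nonneg hC₂0 ht.1
            · exact ht.2
          linarith
  -- refined bound ‖W'' t‖ ≤ C₄ t
  set N1 : ℝ := ‖(1:Matrix (Fin n) (Fin n) ℝ)‖ with hN1def
  have hN10 : 0 ≤ N1 := norm_nonneg _
  set C₄ : ℝ := n * MR * (N1 + C₂) with hC₄def
  have hC₄0 : 0 ≤ C₄ := by positivity
  have hW''le2 : ∀ t ∈ Set.Icc (0:ℝ) 1, ‖W'' t‖ ≤ C₄ * t := by
    intro t ht
    rw [hODE t ht, norm_neg]
    calc ‖R t * W t‖ ≤ n * ‖R t‖ * ‖W t‖ := aux_norm_mul _ _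
      _ ≤ n * MR * ((N1 + C₂) * t) := by
          have h1 := hMR t ht
          have h2 := hWle t ht
          gcongr
      _ = C₄ * t := by ring
  -- S3 : ‖t • W' t - W t‖ ≤ C₄ t³
  have hS3 : ∀ t ∈ Set.Icc (0:ℝ) 1, ‖t • W' t - W t‖ ≤ C₄ * t * t * t := by
    intro t ht
    have hder : ∀ u : ℝ, HasDerivAt (fun u => u • W' u - W u) (u • W'' u) u := by
      intro u
      have h1 := ((hasDerivAt_id u).smul (hW' u)).sub (hW u)
      simp only [one_smul, id_eq] at h1
      have h2 : HasDerivAt (fun u => u • W' u - W u) (u • W'' u + W' u - W' u) u := h1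
      convert h2 using 1
      abel
    have := Convex.norm_image_sub_le_of_norm_hasDerivWithin_le
      (f := fun u => u • W' u - W u) (f' := fun u => u • W'' u)
      (s := Set.Icc 0 t) (C := C₄ * t * t)
      (fun u _ => (hder u).hasDerivWithinAt)
      (fun u hu => by
        have hu1 : u ∈ Set.Icc (0:ℝ) 1 := ⟨hu.1, le_trans hu.2 ht.2⟩
        rw [norm_smul, Real.norm_eq_abs, abs_of_nonneg hu.1]
        calc u * ‖W'' u‖ ≤ u * (C₄ * u) :=
              mul_le_mul_of_nonneg_left (hW''le2 u hu1) hu.1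
          _ ≤ t * (C₄ * t) := by nlinarith [mul_nonneg (mul_nonneg hC₄0 (sub_nonneg.mpr hu.2)) (by linarith [hu.1, hu.2] : (0:ℝ) ≤ t + u)]
          _ = C₄ * t * t := by ring)
      (convex_Icc _ _) (Set.left_mem_Icc.mpr ht.1) (Set.right_mem_Icc.mpr ht.1)
    simp only [hW0, zero_smul, sub_zero, sub_zero, Real.norm_eq_abs] at this
    rw [abs_of_nonneg ht.1] at this
    linarith [this]
  -- t⁻¹ • W t → 1 as t → 0⁺
  have hIocmem : Set.Ioc (0:ℝ) 1 ∈ 𝓝[>] (0:ℝ) :=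
    Ioc_mem_nhdsGT_of_mem (by norm_num : (0:ℝ) ∈ Set.Ico (0:ℝ) 1)
  have hMtend : Tendsto (fun t => t⁻¹ • W t) (𝓝[>] (0:ℝ))
      (𝓝 (1 : Matrix (Fin n) (Fin n) ℝ)) := by
    rw [← tendsto_sub_nhds_zero_iff]
    apply squeeze_zero_norm' (a := fun t => C₂ * t)
    · filter_upwards [hIocmem] with t ht
      have htpos := ht.1
      have e1 : t⁻¹ • W t - 1 = t⁻¹ • (W t - t • (1:Matrix (Fin n) (Fin n) ℝ)) := by
        rw [smul_sub, smul_smul, inv_mul_cancel₀ (ne_of_gt htpos), one_smul]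
      rw [e1, norm_smul, Real.norm_eq_abs, abs_of_pos (inv_pos.mpr htpos)]
      calc t⁻¹ * ‖W t - t • (1:Matrix (Fin n) (Fin n) ℝ)‖ ≤ t⁻¹ * (C₂ * t * t) :=
            mul_le_mul_of_nonneg_left (hS2 t ⟨le_of_lt htpos, ht.2⟩) (le_of_lt (inv_pos.mpr htpos))
        _ = C₂ * t := by field_simp
    · exact ((continuous_const.mul continuous_id).tendsto' 0 0 (by simp)).mono_left
        nhdsWithin_le_nhds
  -- t • (W t)⁻¹ → 1 as t → 0⁺
  have hinv1 : ContinuousAt (Inv.inv : Matrix (Fin n) (Fin n) ℝ → _) 1 := by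
    apply continuousAt_matrix_inv
    rw [Matrix.det_one, Ring.inverse_eq_inv']
    exact continuousAt_inv₀ one_ne_zero
  have hBeq : ∀ t ∈ Set.Ioc (0:ℝ) 1, (t⁻¹ • W t)⁻¹ = t • (W t)⁻¹ := by
    intro t ht
    apply Matrix.inv_eq_left_inv
    rw [Matrix.smul_mul, Matrix.mul_smul, smul_smul, mul_inv_cancel₀ (ne_of_gt ht.1),
      Matrix.nonsing_inv_mul _ (isUnit_iff_ne_zero.mpr (hdet t ht)), one_smul]
  have hBtend : Tendsto (fun t => t • (W t)⁻¹) (𝓝[>] (0:ℝ))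
      (𝓝 (1 : Matrix (Fin n) (Fin n) ℝ)) := by
    have h1 := (hinv1.tendsto.comp hMtend)
    rw [inv_one] at h1
    refine h1.congr' ?_
    filter_upwards [hIocmem] with t ht
    exact hBeq t ht
  set CB : ℝ := N1 + 1 with hCBdef
  have hCB0 : 0 ≤ CB := by positivity
  have hBbd : ∀ᶠ t in 𝓝[>] (0:ℝ), ‖t • (W t)⁻¹‖ ≤ CB := by
    have h1 : Tendsto (fun t => ‖t • (W t)⁻¹‖) (𝓝[>] (0:ℝ)) (𝓝 N1) := hBtend.norm
    filter_upwards [h1.eventually_le_const (by simp [hCBdef] : N1 < CB)] with t ht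
    exact ht
  -- quadratic bound for ‖A t - 1‖
  set C₃ : ℝ := n * C₄ * CB with hC₃def
  have hC₃0 : 0 ≤ C₃ := by positivity
  have hAsub : ∀ᶠ t in 𝓝[>] (0:ℝ), ‖A t - 1‖ ≤ C₃ * (t * t) := by
    filter_upwards [hBbd, hIocmem] with t hB ht
    have htpos := ht.1
    have hdt := hdet t ht
    have e1 : A t - 1 = t⁻¹ • ((t • W' t - W t) * (t • (W t)⁻¹)) := by
      rw [Matrix.mul_smul, smul_smul, inv_mul_cancel₀ (ne_of_gt htpos), one_smul, sub_mul,
        Matrix.smul_mul, Matrix.mul_nonsing_inv _ (isUnit_iff_ne_zero.mpr hdt), hA t ht]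
    rw [e1, norm_smul, Real.norm_eq_abs, abs_of_pos (inv_pos.mpr htpos)]
    calc t⁻¹ * ‖(t • W' t - W t) * (t • (W t)⁻¹)‖
        ≤ t⁻¹ * (n * ‖t • W' t - W t‖ * ‖t • (W t)⁻¹‖) :=
          mul_le_mul_of_nonneg_left (aux_norm_mul _ _) (le_of_lt (inv_pos.mpr htpos))
      _ ≤ t⁻¹ * (n * (C₄ * t * t * t) * CB) := by
          have h2 := hS3 t ⟨le_of_lt htpos, ht.2⟩
          gcongr
      _ = C₃ * (t * t) := by field_simp [hC₃def]; ring
  -- derivative of A at 0 within Icc is 0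
  have hA0der : HasDerivWithinAt A 0 (Set.Icc (0:ℝ) 1) 0 := by
    refine hasDerivWithinAt_iff_tendsto_slope.mpr ?_
    have hsub : Set.Icc (0:ℝ) 1 \ {0} ⊆ Set.Ioi 0 := by
      intro x hx
      rcases hx with ⟨hx1, hx2⟩
      exact lt_of_le_of_ne hx1.1 (Ne.symm (by simpa using hx2))
    apply squeeze_zero_norm' (a := fun t => C₃ * t)
    · have h1 : ∀ᶠ t in 𝓝[>] (0:ℝ), ‖slope A 0 t‖ ≤ C₃ * t := by
        filter_upwards [hAsub, hIocmem] with t h2 h3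
        have htpos := h3.1
        rw [slope_def_module, sub_zero, hA0, norm_smul, Real.norm_eq_abs,
          abs_of_pos (inv_pos.mpr htpos)]
        calc t⁻¹ * ‖A t - 1‖ ≤ t⁻¹ * (C₃ * (t * t)) :=
              mul_le_mul_of_nonneg_left h2 (le_of_lt (inv_pos.mpr htpos))
          _ = C₃ * t := by field_simp
      exact h1.filter_mono (nhdsWithin_mono 0 hsub)
    · exact ((continuous_const.mul continuous_id).tendsto' 0 0 (by simp)).mono_left
        nhdsWithin_le_nhds
  -- derivative of the explicit formula on (0,1]
  have hFder : ∀ t₀ : ℝ, (W t₀).det ≠ 0 → HasDerivAt (fun t => t • (W' t * (W t)⁻¹))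
      (W' t₀ * (W t₀)⁻¹ + t₀ • (W'' t₀ * (W t₀)⁻¹
        + W' t₀ * -((W t₀)⁻¹ * W' t₀ * (W t₀)⁻¹))) t₀ := by
    intro t₀ h
    have h1 := (hasDerivAt_id t₀).smul (aux_hasDerivAt_mul (hW' t₀) (aux_hasDerivAt_inv hW h))
    simp only [one_smul, id_eq] at h1
    have h2 : HasDerivAt (fun t => t • (W' t * (W t)⁻¹))
        (t₀ • (W'' t₀ * (W t₀)⁻¹ + W' t₀ * -((W t₀)⁻¹ * W' t₀ * (W t₀)⁻¹)) + W' t₀ * (W t₀)⁻¹) t₀ := h1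
    convert h2 using 1
    abel
  have hIocNhds : ∀ t₀ ∈ Set.Ioc (0:ℝ) 1, Set.Ioc (0:ℝ) 1 ∈ 𝓝[Set.Icc (0:ℝ) 1] t₀ := by
    intro t₀ ht₀
    rw [mem_nhdsWithin]
    refine ⟨Set.Ioi 0, isOpen_Ioi, ht₀.1, ?_⟩
    rintro x ⟨hx1, hx2⟩
    exact ⟨hx1, hx2.2⟩
  -- the Riccati formula for the derivative on (0,1]
  have hkey : ∀ t₀ ∈ Set.Ioc (0:ℝ) 1, HasDerivWithinAt A
      (-(t₀ • R t₀) - t₀⁻¹ • (A t₀ * A t₀) + t₀⁻¹ • A t₀) (Set.Icc (0:ℝ) 1) t₀ := by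
    intro t₀ ht₀
    have hdt := hdet t₀ ht₀
    have ht0 : t₀ ≠ 0 := ne_of_gt ht₀.1
    have hF := hFder t₀ hdt
    have hAeq : A =ᶠ[𝓝[Set.Icc (0:ℝ) 1] t₀] (fun t => t • (W' t * (W t)⁻¹)) := by
      filter_upwards [hIocNhds t₀ ht₀] with t ht using hA t ht
    have h1 : HasDerivWithinAt A
        (W' t₀ * (W t₀)⁻¹ + t₀ • (W'' t₀ * (W t₀)⁻¹
          + W' t₀ * -((W t₀)⁻¹ * W' t₀ * (W t₀)⁻¹))) (Set.Icc (0:ℝ) 1) t₀ :=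
      (hF.hasDerivWithinAt).congr_of_eventuallyEq hAeq (hA t₀ ht₀)
    convert h1 using 1
    have hV := Matrix.mul_nonsing_inv (W t₀) (isUnit_iff_ne_zero.mpr hdt)
    have e2 : W'' t₀ * (W t₀)⁻¹ = -(R t₀) := by
      rw [hODE t₀ ⟨le_of_lt ht₀.1, ht₀.2⟩, Matrix.neg_mul, mul_assoc, hV, mul_one]
    have e3 : W' t₀ * -((W t₀)⁻¹ * W' t₀ * (W t₀)⁻¹)
        = -((W' t₀ * (W t₀)⁻¹) * (W' t₀ * (W t₀)⁻¹)) := by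
      rw [mul_neg]
      congr 1
      noncomm_ring
    rw [hA t₀ ht₀, e2, e3]
    have e4 : (t₀ • (W' t₀ * (W t₀)⁻¹)) * (t₀ • (W' t₀ * (W t₀)⁻¹))
        = (t₀ * t₀) • ((W' t₀ * (W t₀)⁻¹) * (W' t₀ * (W t₀)⁻¹)) := by
      rw [Matrix.smul_mul, Matrix.mul_smul, smul_smul]
    rw [e4, smul_smul, smul_smul, inv_mul_cancel₀ ht0, one_smul]
    have e5 : t₀⁻¹ * (t₀ * t₀) = t₀ := by field_simp
    rw [e5, smul_add, smul_neg, smul_neg]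
    abel
  have hUD : UniqueDiffOn ℝ (Set.Icc (0:ℝ) 1) := uniqueDiffOn_Icc one_pos
  have hdW : ∀ t₀ ∈ Set.Ioc (0:ℝ) 1, derivWithin A (Set.Icc 0 1) t₀
      = -(t₀ • R t₀) - t₀⁻¹ • (A t₀ * A t₀) + t₀⁻¹ • A t₀ := fun t₀ ht₀ =>
    (hkey t₀ ht₀).derivWithin (hUD t₀ ⟨le_of_lt ht₀.1, ht₀.2⟩)
  have hd0 : derivWithin A (Set.Icc (0:ℝ) 1) 0 = 0 :=
    hA0der.derivWithin (hUD 0 ⟨le_refl _, zero_le_one⟩)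
  have hdiff : DifferentiableOn ℝ A (Set.Icc (0:ℝ) 1) := by
    intro t ht
    rcases eq_or_lt_of_le ht.1 with h | h
    · rw [← h]
      exact hA0der.differentiableWithinAt
    · exact (hkey t ⟨h, ht.2⟩).differentiableWithinAt
  -- continuity of the derivative
  set C₅ : ℝ := MR + n * (N1 + C₃) * C₃ with hC₅def
  have hDcont : ContinuousOn (derivWithin A (Set.Icc (0:ℝ) 1)) (Set.Icc (0:ℝ) 1) := by
    intro t₀ ht₀
    rcases eq_or_lt_of_le ht₀.1 with h | h
    · -- continuity at 0
      rw [← h]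
      have hb : ∀ᶠ t in 𝓝[Set.Icc (0:ℝ) 1] 0,
          ‖derivWithin A (Set.Icc (0:ℝ) 1) t‖ ≤ C₅ * t := by
        have h1 : ∀ᶠ t in 𝓝[>] (0:ℝ), t ∈ Set.Ioc (0:ℝ) 1 →
            ‖derivWithin A (Set.Icc (0:ℝ) 1) t‖ ≤ C₅ * t := by
          filter_upwards [hAsub] with t hA1
          intro ht
          have htpos := ht.1
          rw [hdW t ht]
          have e5 : -(t • R t) - t⁻¹ • (A t * A t) + t⁻¹ • A t
              = -((t • R t) + t⁻¹ • (A t * (A t - 1))) := by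
            rw [mul_sub, mul_one, smul_sub]
            abel
          rw [e5, norm_neg]
          have hAle : ‖A t‖ ≤ N1 + C₃ := by
            have : ‖A t‖ ≤ ‖(1:Matrix (Fin n) (Fin n) ℝ)‖ + ‖A t - 1‖ := by
              have := norm_add_le (1:Matrix (Fin n) (Fin n) ℝ) (A t - 1)
              simpa [add_comm] using this
            have h2 : C₃ * (t * t) ≤ C₃ * 1 := by
              apply mul_le_mul_of_nonneg_left _ hC₃0
              nlinarith [ht.1.le, ht.2]
            calc ‖A t‖ ≤ N1 + ‖A t - 1‖ := this
              _ ≤ N1 + C₃ * (t * t) := by linarith [hA1]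
              _ ≤ N1 + C₃ := by linarith
          calc ‖t • R t + t⁻¹ • (A t * (A t - 1))‖
              ≤ ‖t • R t‖ + ‖t⁻¹ • (A t * (A t - 1))‖ := norm_add_le _ _
            _ ≤ t * MR + t⁻¹ * (n * ‖A t‖ * ‖A t - 1‖) := by
                apply add_le_add
                · rw [norm_smul, Real.norm_eq_abs, abs_of_pos htpos]
                  exact mul_le_mul_of_nonneg_left (hMR t ⟨htpos.le, ht.2⟩) htpos.le
                · rw [norm_smul, Real.norm_eq_abs, abs_of_pos (inv_pos.mpr htpos)]
                  exact mul_le_mul_of_nonneg_left (aux_norm_mul _ _)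
                    (inv_pos.mpr htpos).le
            _ ≤ t * MR + t⁻¹ * (n * (N1 + C₃) * (C₃ * (t * t))) := by
                have hstep : n * ‖A t‖ * ‖A t - 1‖ ≤ n * (N1 + C₃) * (C₃ * (t * t)) := by
                  apply mul_le_mul
                  · exact mul_le_mul_of_nonneg_left hAle (Nat.cast_nonneg n)
                  · exact hA1
                  · exact norm_nonneg _
                  · exact mul_nonneg (Nat.cast_nonneg n) (by linarith)
                exact add_le_add le_rfl
                  (mul_le_mul_of_nonneg_left hstep (inv_pos.mpr htpos).le)
            _ = C₅ * t := by
                have ht0 : t ≠ 0 := ne_of_gt htpos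
                field_simp [hC₅def]
                ring
        have hle : 𝓝[Set.Icc (0:ℝ) 1] (0:ℝ) ≤ pure 0 ⊔ 𝓝[Set.Ioc (0:ℝ) 1] 0 := by
          rw [← nhdsWithin_insert, Set.Ioc_insert_left zero_le_one]
        refine Filter.Eventually.filter_mono hle ?_
        rw [eventually_sup]
        constructor
        · simp only [eventually_pure, hd0, norm_zero, mul_zero, le_refl]
        · have h2 := h1.filter_mono (nhdsWithin_mono (0:ℝ) (Set.Ioc_subset_Ioi_self : Set.Ioc (0:ℝ) 1 ⊆ Set.Ioi 0))
          filter_upwards [h2, self_mem_nhdsWithin] with t h3 h4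
          exact h3 h4
      have hg0 : derivWithin A (Set.Icc (0:ℝ) 1) 0 = 0 := hd0
      unfold ContinuousWithinAt
      rw [hg0]
      apply squeeze_zero_norm' hb
      exact ((continuous_const.mul continuous_id).tendsto' 0 0 (by simp)).mono_left
        nhdsWithin_le_nhds
    · -- continuity at t₀ ∈ (0,1]
      have ht' : t₀ ∈ Set.Ioc (0:ℝ) 1 := ⟨h, ht₀.2⟩
      have hAcont : ContinuousWithinAt A (Set.Icc (0:ℝ) 1) t₀ :=
        (hdiff t₀ ht₀).continuousWithinAt
      have htinv : ContinuousWithinAt (fun t : ℝ => t⁻¹) (Set.Icc (0:ℝ) 1) t₀ :=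
        (continuousAt_inv₀ (ne_of_gt h)).continuousWithinAt
      have hDW : ContinuousWithinAt
          (fun t => -(t • R t) - t⁻¹ • (A t * A t) + t⁻¹ • A t) (Set.Icc (0:ℝ) 1) t₀ := by
        exact (((continuousWithinAt_id.smul (hRc.continuousAt.continuousWithinAt)).neg).sub
          (htinv.smul (hAcont.mul hAcont))).add (htinv.smul hAcont)
      apply hDW.congr_of_eventuallyEq ?_ (hdW t₀ ht')
      filter_upwards [hIocNhds t₀ ht'] with t ht using hdW t ht
  refine ⟨?_, hd0, hdW⟩
  rw [show (1 : WithTop ℕ∞) = 0 + 1 from rfl,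
    contDiffOn_succ_iff_derivWithin hUD]
  exact ⟨hdiff, by simp, contDiffOn_zero.mpr hDcont⟩
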